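/- Eigenvalue repulsion, Dirichlet case: for any two distinct eigenvalues E_i ≠ E_j of the Dirichlet Hamiltonian H, one has |E_i − E_j| ≥ π(η(W)^{−1} − 1)/(η(W)^{−N} − 1). In particular, the minimal spacing between eigenvalues of H is bounded below by a constant of order e^{−bN}, for every choice of the potential values ε_1, …, ε_N in [0, W]. -/

import Mathlib

/-- The quadratic form `q(x, φ) = 1 − 2x sin φ cos φ + x² sin² φ`. -/
noncomputable def qform (x φ : ℝ) : ℝ :=
  1 - 2 * x * Real.sin φ * Real.cos φ + x ^ 2 * Real.sin φ ^ 2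

/-- `η(W) = min { q(x, φ) : |x| ≤ W + 1, 0 ≤ φ ≤ π }` (the minimum exists by
compactness, so it coincides with the infimum). -/
noncomputable def eta (W : ℝ) : ℝ :=
  sInf ((fun p : ℝ × ℝ => qform p.1 p.2) '' (Set.Icc (-(W + 1)) (W + 1) ×ˢ Set.Icc 0 Real.pi))

/-- The Dirichlet Hamiltonian: the `N × N` symmetric tridiagonal matrix with diagonal
entries `ε_n` and off-diagonal entries `1`, i.e. `(Hu)_n = u_{n−1} + ε_n u_n + u_{n+1}`
with `u_0 = u_{N+1} = 0`. -/
def dirichletH (N : ℕ) (ε : Fin N → ℝ) : Matrix (Fin N) (Fin N) ℝ :=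
  fun i j =>
    if i = j then ε i
    else if i.val + 1 = j.val ∨ j.val + 1 = i.val then 1 else 0

namespace EVR

open Polynomial Finset

/-! ### The transfer (characteristic) polynomials -/

noncomputable def jacP (f : ℕ → ℝ) : ℕ → Polynomial ℝ × Polynomial ℝ
  | 0 => (1, X - C (f 0))
  | n + 1 => ((jacP f n).2, (X - C (f (n + 1))) * (jacP f n).2 - (jacP f n).1)

noncomputable def jac (f : ℕ → ℝ) (n : ℕ) : Polynomial ℝ := (jacP f n).1

lemma jac_zero (f : ℕ → ℝ) : jac f 0 = 1 := rfl

lemma jac_one (f : ℕ → ℝ) : jac f 1 = X - C (f 0) := rfl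

lemma jac_rec (f : ℕ → ℝ) (n : ℕ) :
    jac f (n + 2) = (X - C (f (n + 1))) * jac f (n + 1) - jac f n := rfl

lemma jac_monic (f : ℕ → ℝ) : ∀ n, (jac f n).Monic ∧ (jac f n).natDegree = n
  | 0 => ⟨monic_one, natDegree_one⟩
  | 1 => ⟨monic_X_sub_C _, natDegree_X_sub_C _⟩
  | (n + 2) => by
      obtain ⟨h1m, h1d⟩ := jac_monic f (n + 1)
      obtain ⟨h0m, h0d⟩ := jac_monic f n
      have hm : ((X - C (f (n + 1))) * jac f (n + 1)).Monic := (monic_X_sub_C _).mul h1m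
      have hd : ((X - C (f (n + 1))) * jac f (n + 1)).natDegree = n + 2 := by
        rw [(monic_X_sub_C _).natDegree_mul h1m, natDegree_X_sub_C, h1d]
        omega
      have hdeg : ((X - C (f (n + 1))) * jac f (n + 1)).degree = ((n + 2 : ℕ) : WithBot ℕ) := by
        rw [degree_eq_natDegree hm.ne_zero, hd]
      have hlt : (-(jac f n)).degree < ((X - C (f (n + 1))) * jac f (n + 1)).degree := by
        rw [degree_neg, hdeg]
        calc (jac f n).degree = ((n : ℕ) : WithBot ℕ) := by
              rw [degree_eq_natDegree h0m.ne_zero, h0d]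
            _ < ((n + 2 : ℕ) : WithBot ℕ) := by
              exact_mod_cast Nat.lt_add_of_pos_right (by norm_num)
      constructor
      · rw [jac_rec, sub_eq_add_neg]
        exact hm.add_of_left hlt
      · rw [jac_rec, sub_eq_add_neg]
        have hdegsum := degree_add_eq_left_of_degree_lt hlt
        rw [hdeg] at hdegsum
        exact natDegree_eq_of_degree_eq_some hdegsum

lemma jac_ne_zero (f : ℕ → ℝ) (n : ℕ) : jac f n ≠ 0 := (jac_monic f n).1.ne_zero

lemma jac_coeff_top (f : ℕ → ℝ) (n : ℕ) : (jac f n).coeff n = 1 := by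
  have h := jac_monic f n
  have := h.1.coeff_natDegree
  rwa [h.2] at this

lemma jac_coeff_small (f : ℕ → ℝ) {n m : ℕ} (h : n < m) : (jac f n).coeff m = 0 :=
  coeff_eq_zero_of_natDegree_lt (by rw [(jac_monic f n).2]; exact h)

lemma jac_coeff_one (f : ℕ → ℝ) :
    ∀ n, (jac f (n + 1)).coeff n = -(∑ i ∈ range (n + 1), f i)
  | 0 => by simp [jac_one]
  | (n + 1) => by
      rw [jac_rec, coeff_sub, sub_mul, coeff_sub, coeff_X_mul, coeff_C_mul,
        jac_coeff_one f n, jac_coeff_top, jac_coeff_small f (by omega),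
        Finset.sum_range_succ f (n + 1)]
      ring

lemma jac_coeff_two (f : ℕ → ℝ) :
    ∀ n, (jac f (n + 2)).coeff n
      = (∑ i ∈ range (n + 2), ∑ j ∈ range i, f i * f j) - (n + 1)
  | 0 => by
      rw [jac_rec]
      rw [show jac f 1 = X - C (f 0) from rfl, show jac f 0 = 1 from rfl]
      simp [coeff_sub, mul_coeff_zero, coeff_one]
      rw [Finset.sum_range_succ, Finset.sum_range_succ]
      simp
  | (n + 1) => by
      rw [jac_rec, coeff_sub, sub_mul, coeff_sub, coeff_X_mul, coeff_C_mul,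
        jac_coeff_two f n, jac_coeff_one f (n + 1), jac_coeff_top,
        Finset.sum_range_succ (fun i => ∑ j ∈ range i, f i * f j) (n + 2),
        ← Finset.mul_sum]
      push_cast
      ring

/-! ### Wronskian identity -/

lemma jac_wron (f : ℕ → ℝ) :
    ∀ n, derivative (jac f (n + 1)) * jac f n - derivative (jac f n) * jac f (n + 1)
      = ∑ k ∈ range (n + 1), (jac f k) ^ 2
  | 0 => by simp [jac_one, jac_zero, derivative_X_sub_C]
  | (n + 1) => by
      rw [jac_rec, Finset.sum_range_succ, ← jac_wron f n]
      rw [derivative_sub, derivative_mul, derivative_sub, derivative_X, derivative_C]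
      ring

/-! ### The sequence lemma: solutions of the three-term recursion are multiples of `jac` -/

lemma jac_seq (f : ℕ → ℝ) (E : ℝ) (u : ℕ → ℝ) (M : ℕ) (h0 : u 0 = 0)
    (hrec : ∀ j, j < M → u (j + 2) = (E - f j) * u (j + 1) - u j) :
    ∀ j, j ≤ M → u (j + 1) = u 1 * (jac f j).eval E := by
  intro j
  induction j using Nat.strong_induction_on with
  | _ j ih =>
    match j with
    | 0 => intro _; simp [jac_zero]
    | 1 =>
        intro h1
        rw [hrec 0 (by omega), h0, jac_one]
        simp; ring
    | (j + 2) =>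
        intro hj
        rw [hrec (j + 1) (by omega), ih (j + 1) (by omega) (by omega),
          ih j (by omega) (by omega), jac_rec]
        simp only [eval_mul, eval_sub, eval_X, eval_C]
        ring

/-! ### Matrix rows -/

variable {N : ℕ}

lemma entry_split (ε : Fin N → ℝ) (j k : Fin N) :
    dirichletH N ε j k
      = (if k = j then ε j else 0) + (if k.1 = j.1 + 1 then 1 else 0)
        + (if j.1 = k.1 + 1 then 1 else 0) := by
  by_cases e1 : k = j
  · subst e1
    have h2 : ¬ (k.1 = k.1 + 1) := by omega
    simp [dirichletH, h2]
  · have e1' : ¬ j = k := fun h => e1 h.symm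
    by_cases e2 : k.1 = j.1 + 1
    · have h3 : ¬ (j.1 = k.1 + 1) := by omega
      simp [dirichletH, e1, e1', e2, h3]
      omega
    · by_cases e3 : j.1 = k.1 + 1
      · have : j.1 + 1 = k.1 ∨ k.1 + 1 = j.1 := Or.inr e3.symm
        simp [dirichletH, e1, e1', e2, e3, this]
        omega
      · have : ¬ (j.1 + 1 = k.1 ∨ k.1 + 1 = j.1) := by omega
        simp [dirichletH, e1, e1', e2, e3, this]

lemma sum_up (v : Fin N → ℝ) (j : Fin N) :
    (∑ k, if k.1 = j.1 + 1 then v k else 0)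
      = if h : j.1 + 1 < N then v ⟨j.1 + 1, h⟩ else 0 := by
  by_cases h : j.1 + 1 < N
  · rw [dif_pos h]
    have : ∀ k : Fin N, (if k.1 = j.1 + 1 then v k else 0)
        = (if k = (⟨j.1 + 1, h⟩ : Fin N) then v k else 0) := by
      intro k; apply if_congr _ rfl rfl; simp [Fin.ext_iff]
    rw [Finset.sum_congr rfl (fun k _ => this k)]
    simp
  · rw [dif_neg h]
    apply Finset.sum_eq_zero
    intro k _
    have : ¬ (k.1 = j.1 + 1) := by omega
    simp [this]

lemma sum_dn (v : Fin N → ℝ) (j : Fin N) :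
    (∑ k, if j.1 = k.1 + 1 then v k else 0)
      = if h : 0 < j.1 then v ⟨j.1 - 1, by omega⟩ else 0 := by
  by_cases h : 0 < j.1
  · rw [dif_pos h]
    have : ∀ k : Fin N, (if j.1 = k.1 + 1 then v k else 0)
        = (if k = (⟨j.1 - 1, by omega⟩ : Fin N) then v k else 0) := by
      intro k; apply if_congr _ rfl rfl; simp [Fin.ext_iff]; omega
    rw [Finset.sum_congr rfl (fun k _ => this k)]
    simp
  · rw [dif_neg h]
    apply Finset.sum_eq_zero
    intro k _
    have : ¬ (j.1 = k.1 + 1) := by omega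
    simp [this]

lemma mulVec_row (ε : Fin N → ℝ) (v : Fin N → ℝ) (j : Fin N) :
    (dirichletH N ε).mulVec v j
      = ε j * v j + (if h : j.1 + 1 < N then v ⟨j.1 + 1, h⟩ else 0)
        + (if h : 0 < j.1 then v ⟨j.1 - 1, by omega⟩ else 0) := by
  have expand : (dirichletH N ε).mulVec v j
      = ∑ k, ((if k = j then ε j * v k else 0) + ((if k.1 = j.1 + 1 then v k else 0)
          + (if j.1 = k.1 + 1 then v k else 0))) := by
    simp only [Matrix.mulVec, dotProduct]
    refine Finset.sum_congr rfl fun k _ => ?_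
    rw [entry_split]
    split_ifs <;> ring
  rw [expand, Finset.sum_add_distrib, Finset.sum_add_distrib, Finset.sum_ite_eq' univ j
    (fun k => ε j * v k), sum_up, sum_dn]
  simp only [Finset.mem_univ, if_true]
  ring

/-- From an eigenvector, build the 0-padded sequence satisfying the recursion. -/
lemma eigen_padded (ε : Fin N → ℝ) (E : ℝ) (v : Fin N → ℝ)
    (hv : (dirichletH N ε).mulVec v = E • v) (j : ℕ) (hj : j < N) :
    (fun i : ℕ => if h : 0 < i ∧ i ≤ N then v ⟨i - 1, by omega⟩ else 0) (j + 2)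
      = (E - (fun i : ℕ => if h : i < N then ε ⟨i, h⟩ else 0) j)
          * (fun i : ℕ => if h : 0 < i ∧ i ≤ N then v ⟨i - 1, by omega⟩ else 0) (j + 1)
        - (fun i : ℕ => if h : 0 < i ∧ i ≤ N then v ⟨i - 1, by omega⟩ else 0) j := by
  have hrow := congrFun hv ⟨j, hj⟩
  rw [mulVec_row] at hrow
  simp only [Pi.smul_apply, smul_eq_mul] at hrow
  simp only []
  have hb1 : (if h : 0 < j + 1 ∧ j + 1 ≤ N then v ⟨j + 1 - 1, by omega⟩ else 0) = v ⟨j, hj⟩ := by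
    rw [dif_pos ⟨by omega, by omega⟩]
    exact congrArg v (Fin.ext (by simp))
  have hf : (if h : j < N then ε ⟨j, h⟩ else 0) = ε ⟨j, hj⟩ := dif_pos hj
  have hb2 : (if h : 0 < j + 2 ∧ j + 2 ≤ N then v ⟨j + 2 - 1, by omega⟩ else 0)
      = (if h : (⟨j, hj⟩ : Fin N).1 + 1 < N then v ⟨(⟨j, hj⟩ : Fin N).1 + 1, h⟩ else 0) := by
    by_cases h : j + 1 < N
    · rw [dif_pos ⟨by omega, by omega⟩, dif_pos h]
      exact congrArg v (Fin.ext (by simp))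
    · rw [dif_neg (by omega), dif_neg h]
  have hb0 : (if h : 0 < j ∧ j ≤ N then v ⟨j - 1, by omega⟩ else 0)
      = (if h : 0 < (⟨j, hj⟩ : Fin N).1 then v ⟨(⟨j, hj⟩ : Fin N).1 - 1, by omega⟩ else 0) := by
    by_cases h : 0 < j
    · rw [dif_pos ⟨h, by omega⟩, dif_pos h]
    · rw [dif_neg (by omega), dif_neg h]
  rw [hb1, hf, hb2, hb0]
  linarith [hrow]

/-- An eigenvalue is a root of `jac f N`. -/
lemma eigen_root (hN : 1 ≤ N) (ε : Fin N → ℝ) (E : ℝ) (v : Fin N → ℝ) (hv0 : v ≠ 0)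
    (hv : (dirichletH N ε).mulVec v = E • v) :
    (jac (fun i : ℕ => if h : i < N then ε ⟨i, h⟩ else 0) N).eval E = 0 := by
  set f : ℕ → ℝ := fun i => if h : i < N then ε ⟨i, h⟩ else 0 with hfdef
  set b : ℕ → ℝ := fun i => if h : 0 < i ∧ i ≤ N then v ⟨i - 1, by omega⟩ else 0 with hbdef
  have h0 : b 0 = 0 := by simp [hbdef]
  have hrec : ∀ j, j < N → b (j + 2) = (E - f j) * b (j + 1) - b j := fun j hj =>
    eigen_padded ε E v hv j hj
  have hseq := jac_seq f E b N h0 hrec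
  have htop : b (N + 1) = 0 := by
    rw [hbdef]; simp only []; rw [dif_neg (by omega)]
  have hNfact := hseq N le_rfl
  rw [htop] at hNfact
  by_contra hne
  have hb1 : b 1 = 0 := by
    rcases mul_eq_zero.mp hNfact.symm with h | h
    · exact h
    · exact absurd h hne
  apply hv0
  funext ⟨i, hi⟩
  have := hseq i (by omega)
  rw [hb1, zero_mul] at this
  have hbv : b (i + 1) = v ⟨i, hi⟩ := by
    rw [hbdef]; simp only []; rw [dif_pos ⟨by omega, by omega⟩]
    exact congrArg v (Fin.ext (by simp))
  rw [hbv] at this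
  simpa using this

/-! ### Sum shift helper -/

lemma sum_shift {M : Type*} [AddCommGroup M] (g : ℕ → M) (n : ℕ) :
    ∑ j ∈ range n, g (j + 1) = (∑ j ∈ range n, g j) + g n - g 0 := by
  have h1 := Finset.sum_range_succ' g n
  have h2 := Finset.sum_range_succ g n
  rw [h2] at h1
  have h3 : (∑ j ∈ range n, g (j + 1)) + g 0 = (∑ j ∈ range n, g j) + g n := h1.symm
  calc ∑ j ∈ range n, g (j + 1)
      = ((∑ j ∈ range n, g (j + 1)) + g 0) - g 0 := by abel
    _ = (∑ j ∈ range n, g j) + g n - g 0 := by rw [h3]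


/-! ### All roots are real, and lie in `[-2, W+2]` -/

lemma eval_rec_complex (f : ℕ → ℝ) (z : ℂ) (n : ℕ) :
    ((jac f (n + 2)).map (algebraMap ℝ ℂ)).eval z
      = (z - (f (n + 1) : ℂ)) * ((jac f (n + 1)).map (algebraMap ℝ ℂ)).eval z
        - ((jac f n).map (algebraMap ℝ ℂ)).eval z := by
  rw [jac_rec, Polynomial.map_sub, Polynomial.map_mul, Polynomial.map_sub, Polynomial.map_X,
    Polynomial.map_C]
  simp only [eval_sub, eval_mul, eval_X, eval_C, Complex.coe_algebraMap]

lemma eval_map_real (q : Polynomial ℝ) (x : ℝ) :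
    (q.map (algebraMap ℝ ℂ)).eval ((x : ℝ) : ℂ) = ((q.eval x : ℝ) : ℂ) := by
  rw [Polynomial.eval_map]
  exact Polynomial.eval₂_at_apply (algebraMap ℝ ℂ) x

/-- every complex root of `jac f N` is a real number. -/
lemma root_real (hN : 1 ≤ N) (f : ℕ → ℝ) (z : ℂ)
    (hz : ((jac f N).map (algebraMap ℝ ℂ)).eval z = 0) :
    ∃ x : ℝ, (x : ℂ) = z ∧ (jac f N).eval x = 0 := by
  set u : ℕ → ℂ := fun i => ((jac f i).map (algebraMap ℝ ℂ)).eval z with hu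
  have u0 : u 0 = 1 := by simp [hu, jac_zero]
  have u1 : u 1 = z - (f 0 : ℂ) := by
    simp [hu, jac_one, Complex.coe_algebraMap]
  have urec : ∀ n, u (n + 2) = (z - (f (n + 1) : ℂ)) * u (n + 1) - u n :=
    fun n => eval_rec_complex f z n
  have uN : u N = 0 := hz
  set B : ℕ → ℂ := fun i => if i = 0 then 0 else u (i - 1) with hB
  have hB0 : B 0 = 0 := by simp [hB]
  have hBs : ∀ i, B (i + 1) = u i := by intro i; simp [hB]
  have hrow : ∀ j, j < N → B j + (f j : ℂ) * B (j + 1) + B (j + 2) = z * B (j + 1) := by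
    intro j hj
    match j with
    | 0 =>
        have e1 : B (0 + 1) = u 0 := hBs 0
        have e2 : B (0 + 2) = u 1 := hBs 1
        rw [hB0, e1, e2, u0, u1]; ring
    | (j + 1) =>
        have ea : B (j + 1) = u j := hBs j
        have eb : B (j + 1 + 1) = u (j + 1) := hBs (j + 1)
        have ec : B (j + 1 + 2) = u (j + 2) := hBs (j + 2)
        rw [ea, eb, ec, urec j]; ring
  set Q : ℝ := ∑ j ∈ range N, Complex.normSq (u j) with hQ
  have hQ1 : 1 ≤ Q := by
    have h0mem : (0 : ℕ) ∈ range N := mem_range.mpr (by omega)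
    calc (1:ℝ) = Complex.normSq (u 0) := by rw [u0]; simp
      _ ≤ Q := Finset.single_le_sum (f := fun j => Complex.normSq (u j))
          (fun i _ => Complex.normSq_nonneg _) h0mem
  -- main identity
  have hQC : (Q : ℂ) = ∑ j ∈ range N, B (j + 1) * (starRingEnd ℂ) (B (j + 1)) := by
    rw [hQ]
    push_cast
    refine Finset.sum_congr rfl fun j _ => ?_
    rw [hBs, Complex.mul_conj]
  set T1 : ℂ := ∑ j ∈ range N, B j * (starRingEnd ℂ) (B (j + 1)) with hT1
  set Fr : ℂ := ∑ j ∈ range N, (f j : ℂ) * (B (j + 1) * (starRingEnd ℂ) (B (j + 1))) with hFr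
  have key : z * (Q : ℂ) = Fr + T1 + (starRingEnd ℂ) T1 := by
    have e1 : z * (Q : ℂ) = ∑ j ∈ range N, (B j + (f j : ℂ) * B (j + 1) + B (j + 2))
        * (starRingEnd ℂ) (B (j + 1)) := by
      rw [hQC, Finset.mul_sum]
      refine Finset.sum_congr rfl fun j hj => ?_
      calc z * (B (j + 1) * (starRingEnd ℂ) (B (j + 1)))
          = (z * B (j + 1)) * (starRingEnd ℂ) (B (j + 1)) := by ring
        _ = (B j + (f j : ℂ) * B (j + 1) + B (j + 2)) * (starRingEnd ℂ) (B (j + 1)) := by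
            rw [hrow j (mem_range.mp hj)]
    have hshift : ∑ j ∈ range N, B (j + 2) * (starRingEnd ℂ) (B (j + 1))
        = ∑ j ∈ range N, B (j + 1) * (starRingEnd ℂ) (B j) := by
      have hsh := sum_shift (fun j => B (j + 1) * (starRingEnd ℂ) (B j)) N
      have hg0 : B (0 + 1) * (starRingEnd ℂ) (B 0) = 0 := by rw [hB0]; simp
      have hgN : B (N + 1) * (starRingEnd ℂ) (B N) = 0 := by
        rw [hBs, uN]; simp
      rw [hg0, hgN] at hsh
      calc ∑ j ∈ range N, B (j + 2) * (starRingEnd ℂ) (B (j + 1))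
          = ∑ j ∈ range N, B (j + 1 + 1) * (starRingEnd ℂ) (B (j + 1)) := rfl
        _ = (∑ j ∈ range N, B (j + 1) * (starRingEnd ℂ) (B j)) + 0 - 0 := hsh
        _ = ∑ j ∈ range N, B (j + 1) * (starRingEnd ℂ) (B j) := by ring
    have e2 : ∑ j ∈ range N, B (j + 2) * (starRingEnd ℂ) (B (j + 1)) = (starRingEnd ℂ) T1 := by
      rw [hshift, hT1, map_sum]
      refine Finset.sum_congr rfl fun j _ => ?_
      rw [map_mul, Complex.conj_conj]
      ring
    rw [e1]
    have split : ∀ j ∈ range N,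
        (B j + (f j : ℂ) * B (j + 1) + B (j + 2)) * (starRingEnd ℂ) (B (j + 1))
          = B j * (starRingEnd ℂ) (B (j + 1))
            + (f j : ℂ) * (B (j + 1) * (starRingEnd ℂ) (B (j + 1)))
            + B (j + 2) * (starRingEnd ℂ) (B (j + 1)) := fun j _ => by ring
    rw [Finset.sum_congr rfl split, Finset.sum_add_distrib, Finset.sum_add_distrib, e2]
    rw [hFr, hT1]
    ring
  -- conjugate the identity
  have hFrSelf : (starRingEnd ℂ) Fr = Fr := by
    rw [hFr, map_sum]
    refine Finset.sum_congr rfl fun j _ => ?_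
    rw [map_mul, map_mul, Complex.conj_conj, Complex.conj_ofReal]
    ring
  have keyc : (starRingEnd ℂ) z * (Q : ℂ) = Fr + T1 + (starRingEnd ℂ) T1 := by
    have := congrArg (starRingEnd ℂ) key
    rw [map_mul, Complex.conj_ofReal] at this
    rw [map_add, map_add, hFrSelf, Complex.conj_conj] at this
    rw [this]; ring
  have hzz : (starRingEnd ℂ) z = z := by
    have hzero : ((starRingEnd ℂ) z - z) * (Q : ℂ) = 0 := by
      rw [sub_mul, key, keyc]; ring
    rcases mul_eq_zero.mp hzero with h | h
    · exact sub_eq_zero.mp h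
    · exfalso
      rw [Complex.ofReal_eq_zero] at h
      linarith
  have him : z.im = 0 := by
    have := Complex.conj_eq_iff_im.mp hzz
    exact this
  have hzre : ((z.re : ℝ) : ℂ) = z := Complex.ext (by simp) (by simp [him])
  refine ⟨z.re, hzre, ?_⟩
  have h0 : ((jac f N).map (algebraMap ℝ ℂ)).eval ((z.re : ℝ) : ℂ) = 0 := by
    rw [hzre]; exact hz
  rw [eval_map_real] at h0
  exact_mod_cast h0

/-- every real root lies in `[-2, W+2]`. -/
lemma root_range (hN : 1 ≤ N) (W : ℝ) (f : ℕ → ℝ) (hf : ∀ i, 0 ≤ f i ∧ f i ≤ W) (x : ℝ)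
    (hx : (jac f N).eval x = 0) : -2 ≤ x ∧ x ≤ W + 2 := by
  set u : ℕ → ℝ := fun i => (jac f i).eval x with hu
  have u0 : u 0 = 1 := by simp [hu, jac_zero]
  have urec : ∀ n, u (n + 2) = (x - f (n + 1)) * u (n + 1) - u n := by
    intro n
    show (jac f (n + 2)).eval x = (x - f (n + 1)) * (jac f (n + 1)).eval x - (jac f n).eval x
    rw [jac_rec]
    simp only [eval_sub, eval_mul, eval_X, eval_C]
  have uN : u N = 0 := hx
  set B : ℕ → ℝ := fun i => if i = 0 then 0 else u (i - 1) with hB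
  have hB0 : B 0 = 0 := by simp [hB]
  have hBs : ∀ i, B (i + 1) = u i := by intro i; simp [hB]
  have hrow : ∀ j, j < N → B j + f j * B (j + 1) + B (j + 2) = x * B (j + 1) := by
    intro j hj
    match j with
    | 0 =>
        have e1 : B (0 + 1) = u 0 := hBs 0
        have e2 : B (0 + 2) = u 1 := hBs 1
        rw [hB0, e1, e2, u0, show u 1 = x - f 0 by simp [hu, jac_one]]
        ring
    | (j + 1) =>
        have ea : B (j + 1) = u j := hBs j
        have eb : B (j + 1 + 1) = u (j + 1) := hBs (j + 1)
        have ec : B (j + 1 + 2) = u (j + 2) := hBs (j + 2)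
        rw [ea, eb, ec, urec j]; ring
  set Q : ℝ := ∑ j ∈ range N, B (j + 1) ^ 2 with hQ
  have hQ1 : 1 ≤ Q := by
    have h0mem : (0 : ℕ) ∈ range N := mem_range.mpr (by omega)
    calc (1:ℝ) = B (0 + 1) ^ 2 := by rw [hBs, u0]; norm_num
      _ ≤ Q := Finset.single_le_sum (f := fun j => B (j + 1) ^ 2)
          (fun i _ => sq_nonneg _) h0mem
  have hQpos : 0 < Q := by linarith
  set S : ℝ := ∑ j ∈ range N, B j * B (j + 1) with hS
  have hshiftsq : ∑ j ∈ range N, B (j + 1) ^ 2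
      = (∑ j ∈ range N, B j ^ 2) + B N ^ 2 - B 0 ^ 2 := sum_shift (fun j => B j ^ 2) N
  have hBsq_le : ∑ j ∈ range N, B j ^ 2 ≤ Q := by
    rw [hQ]; rw [hshiftsq, hB0]
    nlinarith [sq_nonneg (B N)]
  have hT2 : ∑ j ∈ range N, B (j + 2) * B (j + 1) = S := by
    have hsh := sum_shift (fun j => B (j + 1) * B j) N
    have hg0 : B (0 + 1) * B 0 = 0 := by rw [hB0]; ring
    have hgN : B (N + 1) * B N = 0 := by rw [hBs, uN]; ring
    rw [hg0, hgN] at hsh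
    calc ∑ j ∈ range N, B (j + 2) * B (j + 1)
        = ∑ j ∈ range N, B (j + 1 + 1) * B (j + 1) := rfl
      _ = (∑ j ∈ range N, B (j + 1) * B j) + 0 - 0 := hsh
      _ = ∑ j ∈ range N, B (j + 1) * B j := by ring
      _ = S := by rw [hS]; exact Finset.sum_congr rfl fun j _ => mul_comm _ _
  set Fr : ℝ := ∑ j ∈ range N, f j * B (j + 1) ^ 2 with hFrdef
  have key : x * Q = Fr + 2 * S := by
    have e1 : x * Q = ∑ j ∈ range N, (B j + f j * B (j + 1) + B (j + 2)) * B (j + 1) := by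
      rw [hQ, Finset.mul_sum]
      refine Finset.sum_congr rfl fun j hj => ?_
      calc x * B (j + 1) ^ 2 = (x * B (j + 1)) * B (j + 1) := by ring
        _ = (B j + f j * B (j + 1) + B (j + 2)) * B (j + 1) := by
            rw [hrow j (mem_range.mp hj)]
    rw [e1]
    have : ∀ j ∈ range N, (B j + f j * B (j + 1) + B (j + 2)) * B (j + 1)
        = B j * B (j + 1) + f j * B (j + 1) ^ 2 + B (j + 2) * B (j + 1) := fun j _ => by ring
    rw [Finset.sum_congr rfl this, Finset.sum_add_distrib, Finset.sum_add_distrib, hT2]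
    rw [hS, hFrdef]; ring
  have hSub : S ≤ Q := by
    have h := Finset.sum_nonneg (f := fun j => (B j - B (j + 1)) ^ 2)
      (fun j (_ : j ∈ range N) => sq_nonneg _)
    have expand : ∑ j ∈ range N, (B j - B (j + 1)) ^ 2
        = (∑ j ∈ range N, B j ^ 2) + Q - 2 * S := by
      rw [hQ, hS, Finset.mul_sum, ← Finset.sum_add_distrib, ← Finset.sum_sub_distrib]
      refine Finset.sum_congr rfl fun j _ => by ring
    nlinarith
  have hSlb : -Q ≤ S := by
    have h := Finset.sum_nonneg (f := fun j => (B j + B (j + 1)) ^ 2)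
      (fun j (_ : j ∈ range N) => sq_nonneg _)
    have expand : ∑ j ∈ range N, (B j + B (j + 1)) ^ 2
        = (∑ j ∈ range N, B j ^ 2) + Q + 2 * S := by
      rw [hQ, hS, Finset.mul_sum, ← Finset.sum_add_distrib, ← Finset.sum_add_distrib]
      refine Finset.sum_congr rfl fun j _ => by ring
    nlinarith
  have hFr0 : 0 ≤ Fr :=
    Finset.sum_nonneg fun j _ => mul_nonneg (hf j).1 (sq_nonneg _)
  have hFrW : Fr ≤ W * Q := by
    rw [hFrdef, hQ, Finset.mul_sum]
    exact Finset.sum_le_sum fun j _ =>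
      mul_le_mul_of_nonneg_right (hf j).2 (sq_nonneg _)
  constructor
  · nlinarith
  · nlinarith

/-! ### Factorization of a monic real polynomial with real roots -/

lemma monic_real_factor (Pr : ℝ → Prop) :
    ∀ (n : ℕ) (q : Polynomial ℝ), q.Monic → q.natDegree = n →
    (∀ z : ℂ, (q.map (algebraMap ℝ ℂ)).eval z = 0 → ∃ x : ℝ, (x : ℂ) = z ∧ Pr x) →
    ∃ s : Multiset ℝ, Multiset.card s = n ∧ (∀ x ∈ s, Pr x)
      ∧ q = (s.map fun r => X - C r).prod := by
  intro n
  induction n with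
  | zero =>
      intro q hq hdeg _
      refine ⟨0, rfl, by simp, ?_⟩
      rw [(Monic.natDegree_eq_zero hq).mp hdeg]
      simp
  | succ n ih =>
      intro q hq hdeg hroots
      have hqC : (q.map (algebraMap ℝ ℂ)).Monic := hq.map _
      have hdegC : (q.map (algebraMap ℝ ℂ)).natDegree = n + 1 := by
        rw [hq.natDegree_map]; exact hdeg
      have hdpos : 0 < (q.map (algebraMap ℝ ℂ)).degree := by
        rw [degree_eq_natDegree hqC.ne_zero, hdegC]
        exact_mod_cast Nat.succ_pos n
      obtain ⟨z, hz⟩ := Complex.exists_root hdpos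
      obtain ⟨x, hxz, hPrx⟩ := hroots z hz
      have hxroot : q.IsRoot x := by
        have h0 : (q.map (algebraMap ℝ ℂ)).eval ((x : ℝ) : ℂ) = 0 := by rw [hxz]; exact hz
        rw [eval_map_real] at h0
        exact_mod_cast h0
      obtain ⟨c, hc⟩ := (dvd_iff_isRoot.mpr hxroot)
      have hcm : c.Monic := Monic.of_mul_monic_left (monic_X_sub_C x) (hc ▸ hq)
      have hcd : c.natDegree = n := by
        have hc0 : c ≠ 0 := hcm.ne_zero
        have := natDegree_mul (X_sub_C_ne_zero x) hc0
        rw [← hc, hdeg, natDegree_X_sub_C] at this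
        omega
      have hcroots : ∀ z : ℂ, (c.map (algebraMap ℝ ℂ)).eval z = 0
          → ∃ x : ℝ, (x : ℂ) = z ∧ Pr x := by
        intro w hw
        apply hroots
        rw [hc, Polynomial.map_mul, eval_mul, hw, mul_zero]
      obtain ⟨s, hcard, hsP, hprod⟩ := ih c hcm hcd hcroots
      refine ⟨x ::ₘ s, by simp [hcard], ?_, ?_⟩
      · intro y hy
        rcases Multiset.mem_cons.mp hy with h | h
        · rw [h]; exact hPrx
        · exact hsP y h
      · rw [Multiset.map_cons, Multiset.prod_cons, ← hprod, ← hc]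

/-! ### Multiset symmetric function helpers -/

lemma esymm_one_eq (s : Multiset ℝ) : s.esymm 1 = s.sum := by
  rw [Multiset.esymm, Multiset.powersetCard_one, Multiset.map_map]
  simp [Function.comp]

lemma esymm_two_cons (a : ℝ) (s : Multiset ℝ) :
    (a ::ₘ s).esymm 2 = a * s.sum + s.esymm 2 := by
  have hps : Multiset.powersetCard 2 (a ::ₘ s)
      = Multiset.powersetCard 2 s + (Multiset.powersetCard 1 s).map (Multiset.cons a) :=
    Multiset.powersetCard_cons 1 a s
  rw [Multiset.esymm, hps, Multiset.map_add, Multiset.sum_add, Multiset.map_map]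
  have h1 : ((Multiset.powersetCard 1 s).map (Multiset.prod ∘ Multiset.cons a)).sum
      = a * s.sum := by
    have he : (Multiset.prod ∘ Multiset.cons a : Multiset ℝ → ℝ)
        = fun t => a * t.prod := funext fun t => Multiset.prod_cons a t
    rw [he, Multiset.sum_map_mul_left]
    have h2 : ((Multiset.powersetCard 1 s).map Multiset.prod).sum = s.esymm 1 := rfl
    rw [h2, esymm_one_eq]
  rw [h1, Multiset.esymm]
  ring

lemma sum_sq_esymm (s : Multiset ℝ) :
    (s.map fun r => r ^ 2).sum = s.sum ^ 2 - 2 * s.esymm 2 := by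
  induction s using Multiset.induction_on with
  | empty => simp [Multiset.esymm, Multiset.powersetCard_zero_right]
  | cons a s ih =>
      rw [Multiset.map_cons, Multiset.sum_cons, Multiset.sum_cons, esymm_two_cons, ih]
      ring

/-! ### List/AM-GM helpers -/

lemma list_prod_range (l : List ℝ) : l.prod = ∏ i ∈ range l.length, l.getD i 0 := by
  induction l with
  | nil => simp
  | cons a t ih =>
      rw [List.prod_cons, List.length_cons, Finset.prod_range_succ']
      simp only [List.getD_cons_succ, List.getD_cons_zero]
      rw [← ih]; ring

lemma list_sum_range (l : List ℝ) : l.sum = ∑ i ∈ range l.length, l.getD i 0 := by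
  induction l with
  | nil => simp
  | cons a t ih =>
      rw [List.sum_cons, List.length_cons, Finset.sum_range_succ']
      simp only [List.getD_cons_succ, List.getD_cons_zero]
      rw [← ih]; ring

/-- AM-GM for multisets of nonnegative reals. -/
lemma multiset_amgm (s : Multiset ℝ) (hs : ∀ x ∈ s, 0 ≤ x) (k : ℕ) (hk : Multiset.card s = k)
    (hkpos : 0 < k) :
    s.prod ≤ (s.sum / k) ^ k := by
  set l := s.toList with hl
  have hlen : l.length = k := by rw [hl, Multiset.length_toList, hk]
  have hmem : ∀ i : ℕ, 0 ≤ l.getD i 0 := by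
    intro i
    by_cases h : i < l.length
    · have hg : l.getD i 0 = l.get ⟨i, h⟩ := List.getD_eq_get l 0 ⟨i, h⟩
      rw [hg]
      apply hs
      rw [← Multiset.coe_toList s]
      exact Multiset.mem_coe.mpr (List.get_mem l ⟨i, h⟩)
    · rw [List.getD_eq_default l 0 (by omega)]
  have hprod : s.prod = ∏ i ∈ range k, l.getD i 0 := by
    rw [← Multiset.prod_toList, list_prod_range, hlen]
  have hsum : s.sum = ∑ i ∈ range k, l.getD i 0 := by
    rw [← Multiset.sum_toList, list_sum_range, hlen]
  have hamgm := Real.geom_mean_le_arith_mean_weighted (range k) (fun _ => (k : ℝ)⁻¹)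
    (fun i => l.getD i 0) (fun i _ => by positivity)
    (by
      rw [Finset.sum_const, Finset.card_range, nsmul_eq_mul]
      field_simp)
    (fun i _ => hmem i)
  -- raise both sides to the k-th power
  have hbase : ∀ i ∈ range k, (0:ℝ) ≤ (l.getD i 0) ^ ((k : ℝ)⁻¹) :=
    fun i _ => Real.rpow_nonneg (hmem i) _
  have hpow := pow_le_pow_left₀ (Finset.prod_nonneg hbase) hamgm k
  have hLHS : (∏ i ∈ range k, (l.getD i 0) ^ ((k : ℝ)⁻¹)) ^ k = ∏ i ∈ range k, l.getD i 0 := by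
    rw [← Finset.prod_pow]
    refine Finset.prod_congr rfl fun i _ => ?_
    rw [← Real.rpow_natCast ((l.getD i 0) ^ ((k : ℝ)⁻¹)) k, ← Real.rpow_mul (hmem i)]
    rw [inv_mul_cancel₀ (by exact_mod_cast hkpos.ne'), Real.rpow_one]
  have hRHS : (∑ i ∈ range k, (k : ℝ)⁻¹ * l.getD i 0) = s.sum / k := by
    rw [← Finset.mul_sum, ← hsum]
    ring
  rw [hLHS, hRHS] at hpow
  rw [hprod]
  exact hpow

/-! ### The numerical "battle" lemma -/

lemma battle_facts (y : ℝ) (hy : 1 ≤ y) :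
    ∃ s a : ℝ, s = Real.sqrt (1 + y ^ 2 / 4) ∧ a = 1 + y ^ 2 / 2 + y * s
      ∧ (1309/500 : ℝ) ≤ a ∧ (9/8 : ℝ) * (2 * y ^ 2 + 4) ≤ a ^ 2 := by
  refine ⟨Real.sqrt (1 + y ^ 2 / 4), _, rfl, rfl, ?_, ?_⟩ <;>
  · have hs0 : 0 ≤ Real.sqrt (1 + y ^ 2 / 4) := Real.sqrt_nonneg _
    have hs2 : Real.sqrt (1 + y ^ 2 / 4) ^ 2 = 1 + y ^ 2 / 4 := Real.sq_sqrt (by positivity)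
    have hs118 : (559/500 : ℝ) ≤ Real.sqrt (1 + y ^ 2 / 4) := by
      rw [show (559/500 : ℝ) = Real.sqrt ((559/500) ^ 2) from
        (Real.sqrt_sq (by norm_num)).symm]
      apply Real.sqrt_le_sqrt
      nlinarith
    have hsy : y / 2 ≤ Real.sqrt (1 + y ^ 2 / 4) := by
      rw [show y / 2 = Real.sqrt ((y / 2) ^ 2) from (Real.sqrt_sq (by linarith)).symm]
      apply Real.sqrt_le_sqrt
      nlinarith
    set s : ℝ := Real.sqrt (1 + y ^ 2 / 4)
    clear_value s
    have hys : (559/500 : ℝ) ≤ y * s := by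
      calc (559/500 : ℝ) = 1 * (559/500) := by ring
      _ ≤ y * s := mul_le_mul hy hs118 (by norm_num) (by linarith)
    have hysq : y ^ 2 * (559/500) ≤ y ^ 2 * (y * s) :=
      mul_le_mul_of_nonneg_left hys (sq_nonneg y)
    first
    | nlinarith
    | nlinarith [sq_nonneg (y - 1), sq_nonneg (y ^ 2 - 1), mul_le_mul_of_nonneg_left hsy
        (by positivity : (0:ℝ) ≤ y ^ 3)]

set_option maxHeartbeats 1000000 in
lemma battle (k : ℕ) (y : ℝ) (hy : 1 ≤ y) :
    Real.pi ^ 2 * (((k : ℝ) * (2 * y ^ 2 + 4) + 4 * y ^ 2 + 6) / k) ^ k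
      ≤ 4 * ((1 + y ^ 2 / 2 + y * Real.sqrt (1 + y ^ 2 / 4)) + 1) ^ 2
        * ((1 + y ^ 2 / 2 + y * Real.sqrt (1 + y ^ 2 / 4)) ^ 2) ^ k := by
  obtain ⟨s, a, hsdef, hadef, ha26, hbeta⟩ := battle_facts y hy
  rw [← hsdef, ← hadef]
  have ha0 : (0:ℝ) < a := by linarith
  have ha1 : (1809/500 : ℝ) ≤ a + 1 := by linarith
  have hpi : Real.pi ^ 2 ≤ 9869607/1000000 := by
    have h1 : Real.pi < 3.141593 := Real.pi_lt_d6
    have h2 : (0:ℝ) < Real.pi := Real.pi_pos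
    nlinarith
  have hcpos : (0:ℝ) < 2 * y ^ 2 + 4 := by positivity
  clear hsdef hadef
  match k with
  | 0 =>
      simp only [Nat.cast_zero, pow_zero, mul_one]
      nlinarith
  | 1 =>
      simp only [Nat.cast_one, pow_one]
      have hdiv : ((1:ℝ) * (2 * y ^ 2 + 4) + 4 * y ^ 2 + 6) / 1 = 6 * y ^ 2 + 10 := by ring
      rw [hdiv]
      have e1 : ((9/8 : ℝ) * (2*y^2+4)) ^ 2 ≤ (a^2)^2 :=
        pow_le_pow_left₀ (by positivity) hbeta 2
      have e2 : (a^2)^2 ≤ (a+1)^2 * a^2 := by nlinarith [sq_nonneg a]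
      nlinarith [sq_nonneg y, sq_nonneg (y^2-1)]
  | 2 =>
      have hdiv : (((2:ℕ):ℝ) * (2 * y ^ 2 + 4) + 4 * y ^ 2 + 6) / ((2:ℕ):ℝ) = 4 * y ^ 2 + 7 := by
        push_cast; ring
      rw [hdiv]
      have hb2 : ((9/8 : ℝ) * (2*y^2+4)) ^ 2 ≤ (a^2)^2 :=
        pow_le_pow_left₀ (by positivity) hbeta 2
      have h4 : ((1809/500:ℝ))^2 ≤ (a+1)^2 := pow_le_pow_left₀ (by norm_num) ha1 2
      nlinarith [sq_nonneg y, sq_nonneg (y^2-1), sq_nonneg (4*y^2+7),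
        mul_le_mul hb2 h4 (by norm_num) (by positivity)]
  | (m + 3) =>
      have hk3 : 3 ≤ m + 3 := by omega
      set k : ℕ := m + 3 with hk
      have hkpos : (0:ℝ) < (k:ℝ) := by positivity
      have hmk : ((k : ℝ) * (2 * y ^ 2 + 4) + 4 * y ^ 2 + 6) / k
          ≤ (2 * y ^ 2 + 4) * (1 + 2 / k) := by
        rw [div_le_iff₀ hkpos]
        have he : (2 * y ^ 2 + 4) * (1 + 2 / (k:ℝ)) * k
            = (2 * y ^ 2 + 4) * k + 2 * (2 * y ^ 2 + 4) := by
          field_simp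
        rw [he]
        nlinarith
      have hnum : (0:ℝ) ≤ ((k : ℝ) * (2 * y ^ 2 + 4) + 4 * y ^ 2 + 6) / k := by positivity
      have h2 : (((k : ℝ) * (2 * y ^ 2 + 4) + 4 * y ^ 2 + 6) / k) ^ k
          ≤ ((2 * y ^ 2 + 4) * (1 + 2/k)) ^ k :=
        pow_le_pow_left₀ hnum hmk k
      have hexp : (1 + 2 / (k:ℝ)) ^ k ≤ Real.exp 1 ^ 2 := by
        have e1 : (1 + 2 / (k:ℝ)) ≤ Real.exp (2 / k) := by
          have := Real.add_one_le_exp (2 / (k:ℝ))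
          linarith
        have e2 : (1 + 2 / (k:ℝ)) ^ k ≤ Real.exp (2 / k) ^ k :=
          pow_le_pow_left₀ (by positivity) e1 k
        have e3 : Real.exp (2 / (k:ℝ)) ^ k = Real.exp 2 := by
          rw [← Real.exp_nat_mul]
          congr 1
          field_simp
        have e4 : Real.exp 2 = Real.exp 1 ^ 2 := by
          rw [← Real.exp_nat_mul]; norm_num
        rw [e3, e4] at e2
        exact e2
      have hexpval : Real.exp 1 ^ 2 ≤ 7389057/1000000 := by
        have h1 : Real.exp 1 < 2.7182818286 := Real.exp_one_lt_d9
        have h2 : (0:ℝ) < Real.exp 1 := Real.exp_pos 1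
        nlinarith
      have hnineeight : ((9:ℝ)/8) ^ 3 ≤ ((9:ℝ)/8) ^ k :=
        pow_le_pow_right₀ (by norm_num) hk3
      have hbk : ((9/8 : ℝ) * (2 * y ^ 2 + 4)) ^ k ≤ (a ^ 2) ^ k :=
        pow_le_pow_left₀ (by positivity) hbeta k
      have hck : (0:ℝ) ≤ (2 * y ^ 2 + 4) ^ k := by positivity
      have key : Real.pi ^ 2 * ((1 + 2/(k:ℝ)) ^ k) ≤ 4 * (a+1)^2 * ((9:ℝ)/8) ^ k := by
        have h4 : ((1809/500:ℝ))^2 ≤ (a+1)^2 := pow_le_pow_left₀ (by norm_num) ha1 2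
        have h5 : Real.pi ^ 2 * ((1 + 2/(k:ℝ)) ^ k) ≤ (9869607/1000000) * (7389057/1000000) := by
          have hp1 : (0:ℝ) ≤ (1 + 2/(k:ℝ)) ^ k := by positivity
          have := mul_le_mul hpi (le_trans hexp hexpval) hp1 (by norm_num)
          linarith
        have h8 : (4 * ((1809/500:ℝ))^2 * (9/8:ℝ)^3 : ℝ) ≤ 4 * (a+1)^2 * (9/8:ℝ)^3 := by
          nlinarith
        have h9 : 4 * (a+1)^2 * (9/8:ℝ)^3 ≤ 4 * (a+1)^2 * ((9:ℝ)/8)^k := by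
          have hpos : (0:ℝ) ≤ 4 * (a+1)^2 := by positivity
          nlinarith [hnineeight]
        have h10 : ((9869607:ℝ)/1000000) * (7389057/1000000)
            ≤ 4 * ((1809/500:ℝ))^2 * (9/8:ℝ)^3 := by norm_num
        linarith
      calc Real.pi ^ 2 * (((k : ℝ) * (2*y^2+4) + 4 * y ^ 2 + 6) / k) ^ k
          ≤ Real.pi ^ 2 * ((2 * y ^ 2 + 4) * (1 + 2/k)) ^ k := by
            nlinarith [h2, sq_nonneg Real.pi]
        _ = (Real.pi ^ 2 * (1 + 2/(k:ℝ)) ^ k) * (2 * y ^ 2 + 4) ^ k := by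
            rw [mul_pow]; ring
        _ ≤ (4 * (a+1)^2 * ((9:ℝ)/8) ^ k) * (2 * y ^ 2 + 4) ^ k := by
            apply mul_le_mul_of_nonneg_right key hck
        _ = 4 * (a+1)^2 * ((9/8 : ℝ) * (2 * y ^ 2 + 4)) ^ k := by rw [mul_pow]; ring
        _ ≤ 4 * (a+1)^2 * (a ^ 2) ^ k := by
            apply mul_le_mul_of_nonneg_left hbk (by positivity)

/-! ### Bounds on `eta` -/

lemma qform_pos (x φ : ℝ) : 0 < qform x φ := by
  have key := Real.sin_sq_add_cos_sq φ
  unfold qform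
  nlinarith [sq_nonneg (x * (Real.cos φ - x * Real.sin φ) - Real.sin φ),
    sq_nonneg (Real.cos φ - x * Real.sin φ), sq_nonneg x, sq_nonneg (Real.sin φ)]

lemma qform_continuous : Continuous (fun p : ℝ × ℝ => qform p.1 p.2) := by
  unfold qform
  fun_prop

lemma eta_pos (W : ℝ) (hW : 0 ≤ W) : 0 < eta W := by
  have hcomp : IsCompact ((fun p : ℝ × ℝ => qform p.1 p.2) ''
      (Set.Icc (-(W + 1)) (W + 1) ×ˢ Set.Icc 0 Real.pi)) :=
    (isCompact_Icc.prod isCompact_Icc).image qform_continuous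
  have hne : ((fun p : ℝ × ℝ => qform p.1 p.2) ''
      (Set.Icc (-(W + 1)) (W + 1) ×ˢ Set.Icc 0 Real.pi)).Nonempty := by
    refine ⟨qform 0 0, ⟨(0, 0), ⟨⟨show -(W+1) ≤ (0:ℝ) by linarith,
      show (0:ℝ) ≤ W + 1 by linarith⟩, le_refl 0, Real.pi_pos.le⟩, rfl⟩⟩
  have hmem := hcomp.sInf_mem hne
  obtain ⟨⟨x, φ⟩, _, heq⟩ := hmem
  have heta : eta W = qform x φ := heq.symm
  rw [heta]
  exact qform_pos x φ

lemma eta_le (W : ℝ) (hW : 0 ≤ W) :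
    eta W * (1 + (W + 1) ^ 2 / 2 + (W + 1) * Real.sqrt (1 + (W + 1) ^ 2 / 4)) ≤ 1 := by
  obtain ⟨y, hy⟩ : ∃ y : ℝ, y = W + 1 := ⟨_, rfl⟩
  rw [← hy]
  have hy1 : 1 ≤ y := by rw [hy]; linarith
  have hs0' : 0 ≤ Real.sqrt (1 + y ^ 2 / 4) := Real.sqrt_nonneg _
  have hs2' : Real.sqrt (1 + y ^ 2 / 4) ^ 2 = 1 + y ^ 2 / 4 := Real.sq_sqrt (by positivity)
  have hsy' : y / 2 ≤ Real.sqrt (1 + y ^ 2 / 4) := by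
    rw [show y / 2 = Real.sqrt ((y / 2) ^ 2) from (Real.sqrt_sq (by linarith)).symm]
    apply Real.sqrt_le_sqrt; nlinarith
  obtain ⟨s, hs⟩ : ∃ s : ℝ, s = Real.sqrt (1 + y ^ 2 / 4) := ⟨_, rfl⟩
  rw [← hs]
  rw [← hs] at hs0' hs2' hsy'
  have hs0 : 0 ≤ s := hs0'
  have hs2 : s ^ 2 = 1 + y ^ 2 / 4 := hs2'
  have hsy : y / 2 ≤ s := hsy'
  have hspos : 0 < s := by nlinarith
  obtain ⟨c0, hc0⟩ : ∃ c : ℝ, c = y / 2 / s := ⟨_, rfl⟩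
  have hc0a : 0 ≤ c0 := by rw [hc0]; positivity
  have hc0b : c0 ≤ 1 := by rw [hc0, div_le_one hspos]; exact hsy
  obtain ⟨φ, hφ⟩ : ∃ φ : ℝ, φ = Real.arccos c0 / 2 := ⟨_, rfl⟩
  have h2φ : 2 * φ = Real.arccos c0 := by rw [hφ]; ring
  have hcos2 : Real.cos (2 * φ) = c0 := by
    rw [h2φ]; exact Real.cos_arccos (by linarith) hc0b
  have hsin2 : Real.sin (2 * φ) = 1 / s := by
    rw [h2φ, Real.sin_arccos]
    have he : 1 - c0 ^ 2 = (1 / s) ^ 2 := by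
      have e1 : 1 - c0 ^ 2 = 1 - (y ^ 2 / 4) / s ^ 2 := by rw [hc0]; ring
      have e2 : (1 / s) ^ 2 = 1 / s ^ 2 := by ring
      rw [e1, e2, hs2]
      have hpos14 : (0:ℝ) < 1 + y ^ 2 / 4 := by positivity
      field_simp
      ring
    rw [he, Real.sqrt_sq (by positivity)]
  have hφmem : φ ∈ Set.Icc 0 Real.pi := by
    constructor
    · rw [hφ]; have := Real.arccos_nonneg c0; linarith
    · rw [hφ]; have := Real.arccos_le_pi c0; have := Real.pi_pos; linarith
  have hqval : qform y φ = (1 + y ^ 2 / 2) - y * s := by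
    have hdouble : 2 * Real.sin φ * Real.cos φ = Real.sin (2 * φ) := (Real.sin_two_mul φ).symm
    have hsqsin : Real.sin φ ^ 2 = (1 - Real.cos (2 * φ)) / 2 := by
      have h1 := Real.cos_two_mul φ
      have h2 := Real.sin_sq_add_cos_sq φ
      nlinarith
    unfold qform
    rw [show 2 * y * Real.sin φ * Real.cos φ = y * (2 * Real.sin φ * Real.cos φ) by ring,
      hdouble, hsin2, hsqsin, hcos2, hc0]
    have hsne : s ≠ 0 := ne_of_gt hspos
    have key : (1 + y ^ 2 / 2 - y * s) * s = s + y ^ 2 * s / 2 - y - y ^ 3 / 4 := by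
      linear_combination (-y) * hs2
    have key2 : (1 - y * (1 / s) + y ^ 2 * ((1 - y / 2 / s) / 2)) * s
        = s + y ^ 2 * s / 2 - y - y ^ 3 / 4 := by
      field_simp
      ring
    exact mul_right_cancel₀ hsne (key2.trans key.symm)
  have hetale : eta W ≤ qform y φ := by
    apply csInf_le
    · exact ((isCompact_Icc.prod isCompact_Icc).image qform_continuous).bddBelow
    · refine ⟨(y, φ), ⟨⟨?_, ?_⟩, hφmem⟩, rfl⟩
      · show -(W + 1) ≤ y
        rw [hy]; linarith
      · show y ≤ W + 1
        rw [hy]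
  have hA0 : 0 ≤ 1 + y ^ 2 / 2 + y * s := by positivity
  calc eta W * (1 + y ^ 2 / 2 + y * s)
      ≤ ((1 + y ^ 2 / 2) - y * s) * (1 + y ^ 2 / 2 + y * s) := by
        rw [← hqval]
        exact mul_le_mul_of_nonneg_right hetale hA0
    _ = 1 := by nlinarith [hs2]

lemma sig_sq (f : ℕ → ℝ) :
    ∀ n, (∑ i ∈ range n, f i) ^ 2
      = (∑ i ∈ range n, (f i) ^ 2) + 2 * ∑ i ∈ range n, ∑ j ∈ range i, f i * f j
  | 0 => by simp
  | (n + 1) => by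
      rw [Finset.sum_range_succ f n, Finset.sum_range_succ (fun i => (f i) ^ 2) n,
        Finset.sum_range_succ (fun i => ∑ j ∈ range i, f i * f j) n, ← Finset.mul_sum,
        add_sq, sig_sq f n]
      ring

lemma claimed_mono (n : ℕ) (hn : 1 ≤ n) (a b : ℝ) (ha : 1 < a) (hab : a ≤ b) :
    Real.pi * (b - 1) / (b ^ n - 1) ≤ Real.pi * (a - 1) / (a ^ n - 1) := by
  have ha0 : (0:ℝ) < a := by linarith
  have hb : 1 < b := lt_of_lt_of_le ha hab
  have hSa : (0:ℝ) < ∑ i ∈ range n, a ^ i := by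
    apply Finset.sum_pos (fun i _ => pow_pos ha0 i)
    exact ⟨0, mem_range.mpr (by omega)⟩
  have hSab : (∑ i ∈ range n, a ^ i) ≤ ∑ i ∈ range n, b ^ i :=
    Finset.sum_le_sum fun i _ => pow_le_pow_left₀ (by linarith) hab i
  have hga : a ^ n - 1 = (∑ i ∈ range n, a ^ i) * (a - 1) := (geom_sum_mul a n).symm
  have hgb : b ^ n - 1 = (∑ i ∈ range n, b ^ i) * (b - 1) := (geom_sum_mul b n).symm
  have hea : Real.pi * (a - 1) / (a ^ n - 1) = Real.pi / ∑ i ∈ range n, a ^ i := by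
    rw [hga, mul_comm (∑ i ∈ range n, a ^ i) (a - 1), ← div_div,
      mul_div_assoc, div_self (by linarith : a - 1 ≠ 0), mul_one]
  have heb : Real.pi * (b - 1) / (b ^ n - 1) = Real.pi / ∑ i ∈ range n, b ^ i := by
    rw [hgb, mul_comm (∑ i ∈ range n, b ^ i) (b - 1), ← div_div,
      mul_div_assoc, div_self (by linarith : b - 1 ≠ 0), mul_one]
  rw [hea, heb]
  exact div_le_div_of_nonneg_left Real.pi_pos.le hSa hSab


lemma moment_bound (k : ℕ) (W E₁ dsq sg rh M : ℝ) (hW : 0 ≤ W)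
    (hE1 : -2 ≤ E₁) (hE2 : E₁ ≤ W + 2) (hs0 : 0 ≤ sg) (hsW : sg ≤ ((k:ℝ) + 2) * W)
    (hr : rh ≤ ((k:ℝ) + 2) * W ^ 2 + 2 * ((k:ℝ) + 1)) (hd : 0 ≤ dsq)
    (hM : M = ((k:ℝ) + 2) * E₁ ^ 2 - 2 * E₁ * sg + rh - dsq) :
    M ≤ (k:ℝ) * (2 * (W + 1) ^ 2 + 4) + 4 * (W + 1) ^ 2 + 6 := by
  have hk : (0:ℝ) ≤ (k:ℝ) := Nat.cast_nonneg k
  by_cases hE1p : 0 ≤ E₁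
  · have hEsq : E₁ ^ 2 ≤ (W + 2) ^ 2 := pow_le_pow_left₀ hE1p hE2 2
    have h3 : ((k:ℝ) + 2) * E₁ ^ 2 ≤ ((k:ℝ) + 2) * (W + 2) ^ 2 :=
      mul_le_mul_of_nonneg_left hEsq (by linarith)
    have h4 : 0 ≤ 2 * E₁ * sg := mul_nonneg (by linarith) hs0
    nlinarith [mul_nonneg hk (sq_nonneg W)]
  · push_neg at hE1p
    have hEsq : E₁ ^ 2 ≤ 4 := by nlinarith
    have h3 : ((k:ℝ) + 2) * E₁ ^ 2 ≤ ((k:ℝ) + 2) * 4 :=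
      mul_le_mul_of_nonneg_left hEsq (by linarith)
    have h4 : -(2 * E₁ * sg) ≤ 4 * sg := by nlinarith
    have h5 : 4 * sg ≤ 4 * (((k:ℝ) + 2) * W) := by linarith
    nlinarith [mul_nonneg (by linarith : (0:ℝ) ≤ (k:ℝ) + 2) (sq_nonneg W)]

lemma abs_two_mul_le (b : ℝ) : 2 * |b| ≤ 1 + b ^ 2 := by
  nlinarith [sq_nonneg (|b| - 1), sq_abs b]

/-! ### The core argument -/

set_option maxHeartbeats 1600000 in
theorem core (N : ℕ) (hN : 1 ≤ N) (W : ℝ) (hW : 0 ≤ W)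
    (ε : Fin N → ℝ) (hε : ∀ n, ε n ∈ Set.Icc 0 W)
    (E₁ E₂ : ℝ)
    (h₁ : ∃ v : Fin N → ℝ, v ≠ 0 ∧ (dirichletH N ε).mulVec v = E₁ • v)
    (h₂ : ∃ v : Fin N → ℝ, v ≠ 0 ∧ (dirichletH N ε).mulVec v = E₂ • v)
    (hne : E₁ ≠ E₂) :
    Real.pi * ((_root_.eta W)⁻¹ - 1) / ((_root_.eta W)⁻¹ ^ N - 1) ≤ |E₁ - E₂| := by
  classical
  obtain ⟨v₁, hv₁0, hv₁⟩ := h₁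
  obtain ⟨v₂, hv₂0, hv₂⟩ := h₂
  have hroot1 : (jac (fun i : ℕ => if h : i < N then ε ⟨i, h⟩ else 0) N).eval E₁ = 0 :=
    eigen_root hN ε E₁ v₁ hv₁0 hv₁
  have hroot2 : (jac (fun i : ℕ => if h : i < N then ε ⟨i, h⟩ else 0) N).eval E₂ = 0 :=
    eigen_root hN ε E₂ v₂ hv₂0 hv₂
  obtain ⟨f, hfdef⟩ : ∃ f : ℕ → ℝ, f = fun i : ℕ => if h : i < N then ε ⟨i, h⟩ else 0 :=
    ⟨_, rfl⟩
  rw [← hfdef] at hroot1 hroot2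
  have hfb : ∀ i, 0 ≤ f i ∧ f i ≤ W := by
    intro i
    rw [hfdef]
    by_cases h : i < N
    · simp only [dif_pos h]
      exact ⟨(hε ⟨i, h⟩).1, (hε ⟨i, h⟩).2⟩
    · simp only [dif_neg h]
      exact ⟨le_refl 0, hW⟩
  obtain ⟨s, hcard, hsrange, hfact⟩ := monic_real_factor (fun x => -2 ≤ x ∧ x ≤ W + 2) N
    (jac f N) (jac_monic f N).1 (jac_monic f N).2
    (fun z hz => by
      obtain ⟨x, hxz, hx0⟩ := root_real hN f z hz
      exact ⟨x, hxz, root_range hN W f hfb x hx0⟩)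
  have hevals : ∀ t : ℝ, (jac f N).eval t = (s.map fun r => t - r).prod := by
    intro t
    rw [hfact, eval_multiset_prod, Multiset.map_map]
    apply congrArg
    apply Multiset.map_congr rfl
    intro r _
    simp
  have hE1s : E₁ ∈ s := by
    have h0 : (s.map fun r => E₁ - r).prod = 0 := by rw [← hevals]; exact hroot1
    obtain ⟨r, hrs, hr0⟩ := Multiset.mem_map.mp (Multiset.prod_eq_zero_iff.mp h0)
    have he : E₁ = r := by linarith [sub_eq_zero.mp hr0]
    rwa [he]
  obtain ⟨s₁, hs1⟩ := Multiset.exists_cons_of_mem hE1s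
  have hE2s1 : E₂ ∈ s₁ := by
    have h0 : (s.map fun r => E₂ - r).prod = 0 := by rw [← hevals]; exact hroot2
    rw [hs1, Multiset.map_cons, Multiset.prod_cons] at h0
    have h1 : (s₁.map fun r => E₂ - r).prod = 0 := by
      rcases mul_eq_zero.mp h0 with h | h
      · exact absurd (by linarith [sub_eq_zero.mp h] : E₁ = E₂) hne
      · exact h
    obtain ⟨r, hrs, hr0⟩ := Multiset.mem_map.mp (Multiset.prod_eq_zero_iff.mp h1)
    have he : E₂ = r := by linarith [sub_eq_zero.mp hr0]
    rwa [he]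
  obtain ⟨s₂, hs2⟩ := Multiset.exists_cons_of_mem hE2s1
  obtain ⟨k, hk⟩ : ∃ k : ℕ, Multiset.card s₂ = k := ⟨_, rfl⟩
  have hNk : N = k + 2 := by
    rw [← hcard, hs1, hs2, Multiset.card_cons, Multiset.card_cons, hk]
  have hcards : Multiset.card s = k + 2 := by rw [hcard, hNk]
  -- coefficient identities
  have hpk : jac f N = jac f (k + 2) := by rw [hNk]
  have hcoef1 : (jac f N).coeff (k + 1) = -(∑ i ∈ Finset.range (k + 2), f i) := by
    rw [hpk]; exact jac_coeff_one f (k + 1)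
  have hcoef2 : (jac f N).coeff k
      = (∑ i ∈ Finset.range (k + 2), ∑ j ∈ Finset.range i, f i * f j) - ((k : ℝ) + 1) := by
    rw [hpk]; exact jac_coeff_two f k
  have harith1 : Multiset.card s - (k + 1) = 1 := by omega
  have harith2 : Multiset.card s - k = 2 := by omega
  have hviet1 : (jac f N).coeff (k + 1) = -(s.sum) := by
    rw [hfact, Multiset.prod_X_sub_C_coeff s (by omega : k + 1 ≤ Multiset.card s),
      harith1, esymm_one_eq, pow_one]
    ring
  have hviet2 : (jac f N).coeff k = s.esymm 2 := by
    rw [hfact, Multiset.prod_X_sub_C_coeff s (by omega : k ≤ Multiset.card s), harith2]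
    norm_num
  have hsum : s.sum = ∑ i ∈ Finset.range (k + 2), f i := by
    have h := hviet1.symm.trans hcoef1
    linarith
  have hsq : (s.map fun r => r ^ 2).sum
      = (∑ i ∈ Finset.range (k + 2), (f i) ^ 2) + 2 * ((k : ℝ) + 1) := by
    have h2 : s.esymm 2
        = (∑ i ∈ Finset.range (k + 2), ∑ j ∈ Finset.range i, f i * f j) - ((k : ℝ) + 1) :=
      hviet2.symm.trans hcoef2
    rw [sum_sq_esymm, hsum, h2, sig_sq f (k + 2)]
    ring
  -- bounds on sums
  have hknn : (0:ℝ) ≤ (k:ℝ) := Nat.cast_nonneg k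
  have hsum0 : 0 ≤ s.sum := by
    rw [hsum]; exact Finset.sum_nonneg fun i _ => (hfb i).1
  have hsumW : s.sum ≤ ((k:ℝ) + 2) * W := by
    rw [hsum]
    calc ∑ i ∈ Finset.range (k + 2), f i ≤ ∑ _i ∈ Finset.range (k + 2), W :=
          Finset.sum_le_sum fun i _ => (hfb i).2
      _ = ((k:ℝ) + 2) * W := by
          rw [Finset.sum_const, Finset.card_range, nsmul_eq_mul]; push_cast; ring
  have hsqW : (s.map fun r => r ^ 2).sum ≤ ((k:ℝ) + 2) * W ^ 2 + 2 * ((k:ℝ) + 1) := by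
    rw [hsq]
    have h1 : ∑ i ∈ Finset.range (k + 2), (f i) ^ 2 ≤ ∑ _i ∈ Finset.range (k + 2), W ^ 2 :=
      Finset.sum_le_sum fun i _ => pow_le_pow_left₀ (hfb i).1 (hfb i).2 2
    rw [Finset.sum_const, Finset.card_range, nsmul_eq_mul] at h1
    push_cast at h1
    linarith
  have hE1r : -2 ≤ E₁ ∧ E₁ ≤ W + 2 := hsrange E₁ hE1s
  -- moment bound
  have htotal : (s.map fun r => (E₁ - r) ^ 2).sum
      = ((k:ℝ) + 2) * E₁ ^ 2 - 2 * E₁ * s.sum + (s.map fun r => r ^ 2).sum := by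
    have e1 : (s.map fun r => (E₁ - r) ^ 2)
        = s.map (fun r => E₁ ^ 2 + ((-2 * E₁) * r + r ^ 2)) := by
      apply Multiset.map_congr rfl; intro r _; ring
    rw [e1, Multiset.sum_map_add, Multiset.sum_map_add, Multiset.map_const',
      Multiset.sum_replicate, hcards, Multiset.sum_map_mul_left, Multiset.map_id',
      nsmul_eq_mul]
    push_cast
    ring
  have hMdec : (s.map fun r => (E₁ - r) ^ 2).sum
      = (E₁ - E₂) ^ 2 + (s₂.map fun r => (E₁ - r) ^ 2).sum := by
    rw [hs1, hs2, Multiset.map_cons, Multiset.sum_cons, Multiset.map_cons, Multiset.sum_cons]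
    ring
  obtain ⟨M, hMdef⟩ : ∃ M : ℝ, M = (s₂.map fun r => (E₁ - r) ^ 2).sum := ⟨_, rfl⟩
  have hM0 : 0 ≤ M := by
    rw [hMdef]
    apply Multiset.sum_nonneg
    intro x hx
    obtain ⟨r, _, rfl⟩ := Multiset.mem_map.mp hx
    exact sq_nonneg _
  have hMle : M ≤ (k:ℝ) * (2 * (W + 1) ^ 2 + 4) + 4 * (W + 1) ^ 2 + 6 := by
    have h1 : M = ((k:ℝ) + 2) * E₁ ^ 2 - 2 * E₁ * s.sum + (s.map fun r => r ^ 2).sum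
        - (E₁ - E₂) ^ 2 := by
      rw [hMdef]; linarith [htotal, hMdec]
    exact moment_bound k W E₁ ((E₁ - E₂) ^ 2) s.sum ((s.map fun r => r ^ 2).sum) M hW
      hE1r.1 hE1r.2 hsum0 hsumW hsqW (sq_nonneg _) h1
  -- derivative lower bound |p'(E₁)| ≥ 2
  have hderiv_eval : (Polynomial.derivative (jac f (k + 2))).eval E₁ * (jac f (k + 1)).eval E₁
      = ∑ i ∈ Finset.range (k + 2), ((jac f i).eval E₁) ^ 2 := by
    have h := congrArg (fun q : Polynomial ℝ => q.eval E₁) (jac_wron f (k + 1))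
    simp only [eval_sub, eval_mul] at h
    rw [show (jac f (k + 2)).eval E₁ = 0 from by rw [← hpk]; exact hroot1, mul_zero,
      sub_zero] at h
    rw [h, Polynomial.eval_finset_sum]
    exact Finset.sum_congr rfl fun i _ => by rw [eval_pow]
  have hsum_lower : 1 + ((jac f (k + 1)).eval E₁) ^ 2
      ≤ ∑ i ∈ Finset.range (k + 2), ((jac f i).eval E₁) ^ 2 := by
    have hsub : ({0, k + 1} : Finset ℕ) ⊆ Finset.range (k + 2) := by
      intro x hx
      simp only [Finset.mem_insert, Finset.mem_singleton] at hx
      rcases hx with h | h <;> (subst h; exact Finset.mem_range.mpr (by omega))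
    have hdist : (0 : ℕ) ≠ k + 1 := by omega
    have h := Finset.sum_le_sum_of_subset_of_nonneg hsub
      (fun i _ _ => sq_nonneg ((jac f i).eval E₁))
    rw [Finset.sum_pair hdist] at h
    have hg0 : ((jac f 0).eval E₁) ^ 2 = 1 := by rw [jac_zero]; simp
    rw [hg0] at h
    exact h
  have habs2 : 2 ≤ |(Polynomial.derivative (jac f N)).eval E₁| := by
    rw [hpk]
    obtain ⟨d, hd⟩ : ∃ d : ℝ, d = (Polynomial.derivative (jac f (k + 2))).eval E₁ := ⟨_, rfl⟩
    obtain ⟨b, hb⟩ : ∃ b : ℝ, b = (jac f (k + 1)).eval E₁ := ⟨_, rfl⟩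
    rw [← hd]
    have key : 1 + b ^ 2 ≤ d * b := by
      rw [hd, hb, hderiv_eval]
      exact hsum_lower
    have hbne : b ≠ 0 := by
      intro h
      rw [h] at key
      norm_num at key
    have hbpos : 0 < |b| := abs_pos.mpr hbne
    have habs : d * b ≤ |d| * |b| := by
      rw [← abs_mul]
      exact le_abs_self _
    have h2b : 2 * |b| ≤ 1 + b ^ 2 := abs_two_mul_le b
    have hfin : 2 * |b| ≤ |d| * |b| := by linarith
    exact le_of_mul_le_mul_right hfin hbpos
  -- derivative factorization
  have hG : (Polynomial.derivative (jac f N)).eval E₁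
      = (E₁ - E₂) * (s₂.map fun r => E₁ - r).prod := by
    have hfact2 : jac f N = (X - C E₁) * ((X - C E₂) * (s₂.map fun r => X - C r).prod) := by
      rw [hfact, hs1, hs2, Multiset.map_cons, Multiset.prod_cons, Multiset.map_cons,
        Multiset.prod_cons]
    rw [hfact2, derivative_mul, derivative_X_sub_C]
    simp only [eval_add, eval_mul, eval_one, one_mul, eval_sub, eval_X, eval_C, sub_self,
      zero_mul, add_zero]
    congr 1
    rw [eval_multiset_prod, Multiset.map_map]
    apply congrArg
    apply Multiset.map_congr rfl
    intro r _
    simp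
  have h2G : 2 ≤ |E₁ - E₂| * |(s₂.map fun r => E₁ - r).prod| := by
    rw [← abs_mul, ← hG]
    exact habs2
  -- AM-GM bound on the product
  have hGsq : ((s₂.map fun r => E₁ - r).prod) ^ 2 = (s₂.map fun r => (E₁ - r) ^ 2).prod :=
    (Multiset.prod_map_pow).symm
  have hPr : (s₂.map fun r => (E₁ - r) ^ 2).prod
      ≤ (((k:ℝ) * (2 * (W + 1) ^ 2 + 4) + 4 * (W + 1) ^ 2 + 6) / k) ^ k := by
    rcases Nat.eq_zero_or_pos k with hk0 | hkpos
    · have hs20 : s₂ = 0 := Multiset.card_eq_zero.mp (by rw [hk, hk0])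
      rw [hs20, hk0]
      simp
    · have hels : ∀ x ∈ (s₂.map fun r => (E₁ - r) ^ 2), 0 ≤ x := by
        intro x hx
        obtain ⟨r, _, rfl⟩ := Multiset.mem_map.mp hx
        exact sq_nonneg _
      have hcardm : Multiset.card (s₂.map fun r => (E₁ - r) ^ 2) = k := by
        rw [Multiset.card_map, hk]
      have hamgm := multiset_amgm (s₂.map fun r => (E₁ - r) ^ 2) hels k hcardm hkpos
      rw [← hMdef] at hamgm
      refine le_trans hamgm ?_
      apply pow_le_pow_left₀ (by positivity) ?_ k
      have hkpos' : (0:ℝ) < (k:ℝ) := by exact_mod_cast hkpos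
      exact (div_le_div_iff_of_pos_right hkpos').mpr hMle
  -- eta facts
  have hetapos := eta_pos W hW
  have hetale := eta_le W hW
  obtain ⟨s', a, hs'def, hadef, ha26, hbeta⟩ := battle_facts (W + 1) (by linarith)
  have haexpr : a = 1 + (W + 1) ^ 2 / 2 + (W + 1) * Real.sqrt (1 + (W + 1) ^ 2 / 4) := by
    rw [hadef, hs'def]
  have hA1 : 1 < 1 + (W + 1) ^ 2 / 2 + (W + 1) * Real.sqrt (1 + (W + 1) ^ 2 / 4) := by
    rw [← haexpr]; linarith
  have hAinv : (1 + (W + 1) ^ 2 / 2 + (W + 1) * Real.sqrt (1 + (W + 1) ^ 2 / 4))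
      ≤ (_root_.eta W)⁻¹ := by
    rw [inv_eq_one_div, le_div_iff₀ hetapos]
    calc (1 + (W + 1) ^ 2 / 2 + (W + 1) * Real.sqrt (1 + (W + 1) ^ 2 / 4)) * _root_.eta W
        = _root_.eta W * (1 + (W + 1) ^ 2 / 2 + (W + 1) * Real.sqrt (1 + (W + 1) ^ 2 / 4)) :=
          mul_comm _ _
      _ ≤ 1 := hetale
  have hmono := claimed_mono N hN
    (1 + (W + 1) ^ 2 / 2 + (W + 1) * Real.sqrt (1 + (W + 1) ^ 2 / 4))
    ((_root_.eta W)⁻¹) hA1 hAinv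
  refine le_trans hmono ?_
  rw [← haexpr]
  -- now: π (a-1)/(a^N - 1) ≤ |E₁ - E₂|
  have ha0 : (0:ℝ) < a := by linarith
  have ha1' : 1 < a := by linarith
  have haN1 : 1 < a ^ N := one_lt_pow₀ ha1' (by omega)
  have hAN : (a + 1) * a ^ k * (a - 1) ≤ a ^ N - 1 := by
    have hgs : a ^ N - 1 = (∑ i ∈ Finset.range N, a ^ i) * (a - 1) := (geom_sum_mul a N).symm
    have hsub : ({k, k + 1} : Finset ℕ) ⊆ Finset.range N := by
      intro x hx
      simp only [Finset.mem_insert, Finset.mem_singleton] at hx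
      rcases hx with h | h <;> (subst h; exact Finset.mem_range.mpr (by omega))
    have hpair : ∑ i ∈ ({k, k + 1} : Finset ℕ), a ^ i = a ^ k + a ^ (k + 1) :=
      Finset.sum_pair (by omega)
    have hle : a ^ k + a ^ (k + 1) ≤ ∑ i ∈ Finset.range N, a ^ i := by
      rw [← hpair]
      exact Finset.sum_le_sum_of_subset_of_nonneg hsub fun i _ _ => (pow_pos ha0 i).le
    have h1 : (a + 1) * a ^ k = a ^ k + a ^ (k + 1) := by rw [pow_succ]; ring
    have h2 : (a ^ k + a ^ (k + 1)) * (a - 1) ≤ (∑ i ∈ Finset.range N, a ^ i) * (a - 1) :=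
      mul_le_mul_of_nonneg_right hle (by linarith)
    rw [hgs, h1]
    exact h2
  have hCL0 : 0 ≤ Real.pi * (a - 1) / (a ^ N - 1) := by
    apply div_nonneg
    · exact mul_nonneg Real.pi_pos.le (by linarith)
    · linarith
  have hCLle : Real.pi * (a - 1) / (a ^ N - 1) ≤ Real.pi / ((a + 1) * a ^ k) := by
    have hd1 : (0:ℝ) < (a + 1) * a ^ k * (a - 1) :=
      mul_pos (mul_pos (by linarith) (pow_pos ha0 k)) (by linarith)
    calc Real.pi * (a - 1) / (a ^ N - 1)
        ≤ Real.pi * (a - 1) / ((a + 1) * a ^ k * (a - 1)) :=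
          div_le_div_of_nonneg_left (mul_nonneg Real.pi_pos.le (by linarith)) hd1 hAN
      _ = Real.pi / ((a + 1) * a ^ k) :=
          mul_div_mul_right _ _ (by linarith : a - 1 ≠ 0)
  have hbattle : Real.pi ^ 2 * (((k:ℝ) * (2 * (W + 1) ^ 2 + 4) + 4 * (W + 1) ^ 2 + 6) / k) ^ k
      ≤ 4 * (a + 1) ^ 2 * (a ^ 2) ^ k := by
    have hb := battle k (W + 1) (by linarith)
    rw [← hs'def, ← hadef] at hb
    exact hb
  have hsq4 : (Real.pi / ((a + 1) * a ^ k)) ^ 2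
      * (((k:ℝ) * (2 * (W + 1) ^ 2 + 4) + 4 * (W + 1) ^ 2 + 6) / k) ^ k ≤ 4 := by
    have hden : (0:ℝ) < ((a + 1) * a ^ k) ^ 2 :=
      pow_pos (mul_pos (by linarith) (pow_pos ha0 k)) 2
    rw [div_pow, div_mul_eq_mul_div, div_le_iff₀ hden]
    calc Real.pi ^ 2 * (((k:ℝ) * (2 * (W + 1) ^ 2 + 4) + 4 * (W + 1) ^ 2 + 6) / k) ^ k
        ≤ 4 * (a + 1) ^ 2 * (a ^ 2) ^ k := hbattle
      _ = 4 * ((a + 1) * a ^ k) ^ 2 := by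
          rw [show (a ^ 2) ^ k = (a ^ k) ^ 2 by rw [← pow_mul, ← pow_mul, Nat.mul_comm],
            mul_pow]
          ring
  obtain ⟨g, hgdef⟩ : ∃ g : ℝ, g = (s₂.map fun r => E₁ - r).prod := ⟨_, rfl⟩
  rw [← hgdef] at h2G hGsq
  have hfinal : Real.pi * (a - 1) / (a ^ N - 1) * |g| ≤ 2 := by
    have hx : (Real.pi * (a - 1) / (a ^ N - 1) * |g|) ^ 2 ≤ 2 ^ 2 := by
      have e : (Real.pi * (a - 1) / (a ^ N - 1) * |g|) ^ 2
          = (Real.pi * (a - 1) / (a ^ N - 1)) ^ 2 * g ^ 2 := by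
        rw [mul_pow, sq_abs]
      rw [e]
      have hg2 : g ^ 2 ≤ (((k:ℝ) * (2 * (W + 1) ^ 2 + 4) + 4 * (W + 1) ^ 2 + 6) / k) ^ k := by
        rw [hGsq]; exact hPr
      calc (Real.pi * (a - 1) / (a ^ N - 1)) ^ 2 * g ^ 2
          ≤ (Real.pi / ((a + 1) * a ^ k)) ^ 2
            * (((k:ℝ) * (2 * (W + 1) ^ 2 + 4) + 4 * (W + 1) ^ 2 + 6) / k) ^ k := by
            apply mul_le_mul (pow_le_pow_left₀ hCL0 hCLle 2) hg2 (sq_nonneg g)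
              (sq_nonneg _)
        _ ≤ 4 := hsq4
        _ = 2 ^ 2 := by norm_num
    exact le_of_pow_le_pow_left₀ two_ne_zero (by norm_num) hx
  have hgpos : 0 < |g| := by
    by_contra h
    push_neg at h
    have hg0 : |g| = 0 := le_antisymm h (abs_nonneg g)
    rw [hg0, mul_zero] at h2G
    linarith
  have hchain : Real.pi * (a - 1) / (a ^ N - 1) * |g| ≤ |E₁ - E₂| * |g| :=
    le_trans hfinal h2G
  exact le_of_mul_le_mul_right hchain hgpos

end EVR


theorem eigenvalue_repulsion_dirichlet
    (N : ℕ) (hN : 1 ≤ N) (W : ℝ) (hW : 0 ≤ W)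
    (ε : Fin N → ℝ) (hε : ∀ n, ε n ∈ Set.Icc 0 W)
    (E₁ E₂ : ℝ)
    (h₁ : ∃ v : Fin N → ℝ, v ≠ 0 ∧ (dirichletH N ε).mulVec v = E₁ • v)
    (h₂ : ∃ v : Fin N → ℝ, v ≠ 0 ∧ (dirichletH N ε).mulVec v = E₂ • v)
    (hne : E₁ ≠ E₂) :
    Real.pi * ((eta W)⁻¹ - 1) / ((eta W)⁻¹ ^ N - 1) ≤ |E₁ - E₂| :=
  EVR.core N hN W hW ε hε E₁ E₂ h₁ h₂ hne
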